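/- Under the angle condition liminf_{|y|→∞} (y · Dω(y))/(|y||Dω(y)|) ≥ η for some η ∈ (0,1], the maximizer y₀(p) of p·y − |y|ω(y) satisfies liminf_{|p|→∞} (p · y₀(p))/(|p||y₀(p)|) ≥ η. -/

import Mathlib

open MeasureTheory Real Set Filter
open scoped RealInnerProductSpace

set_option maxHeartbeats 1000000 in
/-- under the angle condition
`liminf_{‖y‖→∞} (y·Dω(y))/(‖y‖‖Dω(y)‖) ≥ η`, any maximizer selection `y₀(p)` of
`p·y − ‖y‖ω(y)` satisfies `liminf_{‖p‖→∞} (p·y₀(p))/(‖p‖‖y₀(p)‖) ≥ η`. -/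
theorem stmt_16 {N : ℕ}
    (ω : EuclideanSpace ℝ (Fin N) → ℝ)
    (hωC1 : ContDiffOn ℝ 1 ω {(0 : EuclideanSpace ℝ (Fin N))}ᶜ)
    (hconv : ConvexOn ℝ Set.univ (fun y => ‖y‖ * ω y))
    (hsuper : Filter.Tendsto (fun y => ‖y‖ * ω y / ‖y‖)
      (Bornology.cobounded (EuclideanSpace ℝ (Fin N))) Filter.atTop)
    (η : ℝ) (hη : 0 < η) (hη1 : η ≤ 1)
    (hangle : η ≤ Filter.liminf
      (fun y : EuclideanSpace ℝ (Fin N) =>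
        ⟪y, gradient ω y⟫ / (‖y‖ * ‖gradient ω y‖))
      (Bornology.cobounded (EuclideanSpace ℝ (Fin N))))
    (y₀ : EuclideanSpace ℝ (Fin N) → EuclideanSpace ℝ (Fin N))
    (hy₀ : ∀ p, IsMaxOn (fun y => ⟪p, y⟫ - ‖y‖ * ω y) Set.univ (y₀ p)) :
    η ≤ Filter.liminf
      (fun p : EuclideanSpace ℝ (Fin N) => ⟪p, y₀ p⟫ / (‖p‖ * ‖y₀ p‖))
      (Bornology.cobounded (EuclideanSpace ℝ (Fin N))) := by
  by_cases hbot : Bornology.cobounded (EuclideanSpace ℝ (Fin N)) = ⊥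
  · rw [hbot] at hangle ⊢
    rw [Filter.liminf_eq] at hangle ⊢
    simpa using hangle
  haveI : (Bornology.cobounded (EuclideanSpace ℝ (Fin N))).NeBot := ⟨hbot⟩
  set l := Bornology.cobounded (EuclideanSpace ℝ (Fin N)) with hldef
  set f : EuclideanSpace ℝ (Fin N) → ℝ := fun y => ‖y‖ * ω y with hfdef
  -- continuity of f
  have hfcont : Continuous f := by
    rw [← continuousOn_univ]
    exact hconv.continuousOn isOpen_univ
  -- ω tends to infinity
  have hωtop : Tendsto ω l atTop := by
    refine hsuper.congr' ?_
    filter_upwards [eventually_cobounded_le_norm (1 : ℝ)] with y hy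
    have : ‖y‖ ≠ 0 := by positivity
    field_simp
  -- global lower bound for f
  obtain ⟨R₀', -, hR₀'⟩ := (Metric.hasBasis_cobounded_compl_closedBall
    (0 : EuclideanSpace ℝ (Fin N))).mem_iff.mp (hωtop.eventually_ge_atTop 0)
  set R₀ := max R₀' 0 with hR₀def
  have hR₀ : (Metric.closedBall (0 : EuclideanSpace ℝ (Fin N)) R₀)ᶜ ⊆ {y | 0 ≤ ω y} := by
    refine subset_trans (compl_subset_compl.mpr ?_) hR₀'
    exact Metric.closedBall_subset_closedBall (le_max_left _ _)
  obtain ⟨C₀, hC₀⟩ := (isCompact_closedBall (0 : EuclideanSpace ℝ (Fin N)) R₀).exists_bound_of_continuousOn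
    hfcont.continuousOn
  have hM : ∀ y, -C₀ ≤ f y := by
    intro y
    by_cases hy : y ∈ Metric.closedBall (0 : EuclideanSpace ℝ (Fin N)) R₀
    · have := hC₀ y hy
      rw [Real.norm_eq_abs] at this
      linarith [abs_nonneg (f y), (abs_le.mp this).1]
    · have h0 : 0 ≤ ω y := hR₀ hy
      have h1 : 0 ≤ f y := mul_nonneg (norm_nonneg _) h0
      have h2 : 0 ≤ C₀ := le_trans (norm_nonneg _) (hC₀ 0 (by simp [Metric.mem_closedBall, hR₀def]))
      linarith
  have htend : Tendsto y₀ l l := by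
    rw [hldef, ← tendsto_norm_atTop_iff_cobounded, tendsto_atTop]
    intro R
    set r : ℝ := |R| + 1 with hrdef
    obtain ⟨C, hC⟩ := (isCompact_closedBall (0 : EuclideanSpace ℝ (Fin N))
      r).exists_bound_of_continuousOn hfcont.continuousOn
    filter_upwards [eventually_cobounded_le_norm (max 1 (C + C₀))] with p hp
    have hp1 : (1:ℝ) ≤ ‖p‖ := le_trans (le_max_left _ _) hp
    have hp2 : C + C₀ ≤ ‖p‖ := le_trans (le_max_right _ _) hp
    have hppos : (0:ℝ) < ‖p‖ := by linarith
    have hrpos : (0:ℝ) < r := by positivity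
    set y : EuclideanSpace ℝ (Fin N) := (r * ‖p‖⁻¹) • p with hydef
    have hyball : y ∈ Metric.closedBall (0 : EuclideanSpace ℝ (Fin N)) r := by
      simp only [Metric.mem_closedBall, dist_zero_right, hydef, norm_smul, Real.norm_eq_abs,
        abs_mul, abs_inv, abs_norm, abs_of_pos hrpos]
      rw [mul_assoc, inv_mul_cancel₀ (ne_of_gt hppos), mul_one]
    have hmax := hy₀ p (Set.mem_univ y)
    simp only [Set.mem_setOf_eq] at hmax
    have hpy : ⟪p, y⟫ = r * ‖p‖ := by
      rw [hydef, real_inner_smul_right, real_inner_self_eq_norm_mul_norm]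
      field_simp
    have hfy : ‖y‖ * ω y ≤ C := by
      have := hC y hyball
      rw [Real.norm_eq_abs] at this
      exact (abs_le.mp this).2
    have hCS : ⟪p, y₀ p⟫ ≤ ‖p‖ * ‖y₀ p‖ := real_inner_le_norm p (y₀ p)
    have hMy : -C₀ ≤ ‖y₀ p‖ * ω (y₀ p) := hM _
    have hkey : |R| * ‖p‖ ≤ ‖y₀ p‖ * ‖p‖ := by nlinarith
    have : |R| ≤ ‖y₀ p‖ := le_of_mul_le_mul_right hkey hppos
    linarith [le_abs_self R]
  have habs : ∀ x z : EuclideanSpace ℝ (Fin N), |⟪x, z⟫ / (‖x‖ * ‖z‖)| ≤ 1 := by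
    intro x z
    rcases eq_or_ne (‖x‖ * ‖z‖) 0 with h | h
    · simp [h]
    · have hpos : 0 < ‖x‖ * ‖z‖ := lt_of_le_of_ne (by positivity) (Ne.symm h)
      rw [abs_div, abs_of_pos hpos, div_le_one hpos]
      exact abs_real_inner_le_norm x z
  have key : ∀ b : ℝ, 0 < b → b < η → ∀ᶠ p in l, b ≤ ⟪p, y₀ p⟫ / (‖p‖ * ‖y₀ p‖) := by
    intro b hb0 hbη
    have hb1 : b ≤ 1 := le_trans hbη.le hη1
    have hcB : IsBoundedUnder (· ≥ ·) l
        (fun y : EuclideanSpace ℝ (Fin N) => ⟪y, gradient ω y⟫ / (‖y‖ * ‖gradient ω y‖)) :=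
      isBoundedUnder_of ⟨-1, fun y => (abs_le.mp (habs y _)).1⟩
    have hev1 : ∀ᶠ y in l, b < ⟪y, gradient ω y⟫ / (‖y‖ * ‖gradient ω y‖) :=
      eventually_lt_of_lt_liminf (lt_of_lt_of_le hbη hangle) hcB
    have hev2 := htend.eventually hev1
    have hev3 : ∀ᶠ p in l, 0 ≤ ω (y₀ p) := htend.eventually (hωtop.eventually_ge_atTop 0)
    have hev4 : ∀ᶠ p in l, 1 ≤ ‖y₀ p‖ := htend.eventually (eventually_cobounded_le_norm 1)
    filter_upwards [hev2, hev3, hev4, eventually_cobounded_le_norm (1 : ℝ)] with p hc hw0 hq1 hp1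
    set q := y₀ p with hqdef
    have hqpos : (0:ℝ) < ‖q‖ := lt_of_lt_of_le one_pos hq1
    have hppos : (0:ℝ) < ‖p‖ := lt_of_lt_of_le one_pos hp1
    have hq0 : q ≠ 0 := by
      intro h
      rw [h] at hq1
      simp at hq1
      linarith
    have hg0 : gradient ω q ≠ 0 := by
      intro h
      rw [h] at hc
      simp at hc
      linarith
    have hgpos : (0:ℝ) < ‖gradient ω q‖ := norm_pos_iff.mpr hg0
    have hωd : DifferentiableAt ℝ ω q :=
      (hωC1.contDiffAt ((isOpen_compl_singleton).mem_nhds hq0)).differentiableAt one_ne_zero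
    have hn2 : HasFDerivAt (fun y : EuclideanSpace ℝ (Fin N) => ‖y‖ ^ 2)
        ((2:ℕ) • innerSL ℝ q) q := (hasStrictFDerivAt_norm_sq q).hasFDerivAt
    have hsq : HasDerivAt Real.sqrt (1 / (2 * Real.sqrt (‖q‖ ^ 2))) (‖q‖ ^ 2) :=
      Real.hasDerivAt_sqrt (by positivity)
    have hn3 := hsq.comp_hasFDerivAt q hn2
    have hfun : (Real.sqrt ∘ fun y : EuclideanSpace ℝ (Fin N) => ‖y‖ ^ 2)
        = fun y : EuclideanSpace ℝ (Fin N) => ‖y‖ := by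
      funext y
      simp [Function.comp, Real.sqrt_sq (norm_nonneg y)]
    have hder : (1 / (2 * Real.sqrt (‖q‖ ^ 2))) • ((2:ℕ) • innerSL ℝ q)
        = ‖q‖⁻¹ • innerSL ℝ q := by
      rw [Real.sqrt_sq (norm_nonneg q)]
      ext v
      simp only [ContinuousLinearMap.coe_smul', Pi.smul_apply, smul_eq_mul, two_smul,
        ContinuousLinearMap.add_apply, innerSL_apply_apply]
      field_simp
      ring
    rw [hfun, hder] at hn3
    have hf' : HasFDerivAt (fun y : EuclideanSpace ℝ (Fin N) => ‖y‖ * ω y)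
        (‖q‖ • fderiv ℝ ω q + ω q • (‖q‖⁻¹ • innerSL ℝ q)) q :=
      hn3.mul hωd.hasFDerivAt
    have hφ : HasFDerivAt (fun y : EuclideanSpace ℝ (Fin N) => ⟪p, y⟫ - ‖y‖ * ω y)
        (innerSL ℝ p - (‖q‖ • fderiv ℝ ω q + ω q • (‖q‖⁻¹ • innerSL ℝ q))) q :=
      ((innerSL ℝ p).hasFDerivAt).sub hf'
    have hlocmax : IsLocalMax (fun y : EuclideanSpace ℝ (Fin N) => ⟪p, y⟫ - ‖y‖ * ω y) q :=
      (hy₀ p).isLocalMax Filter.univ_mem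
    have h0 := hlocmax.hasFDerivAt_eq_zero hφ
    have hEq : innerSL ℝ p = ‖q‖ • fderiv ℝ ω q + ω q • (‖q‖⁻¹ • innerSL ℝ q) :=
      sub_eq_zero.mp h0
    have hgradv : ∀ v : EuclideanSpace ℝ (Fin N), ⟪gradient ω q, v⟫ = fderiv ℝ ω q v := by
      intro v
      simp [gradient, InnerProductSpace.toDual_symm_apply]
    have hId : ∀ v : EuclideanSpace ℝ (Fin N),
        ⟪p, v⟫ = ‖q‖ * ⟪gradient ω q, v⟫ + ω q * (‖q‖⁻¹ * ⟪q, v⟫) := by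
      intro v
      have h1 := DFunLike.congr_fun hEq v
      simp only [ContinuousLinearMap.add_apply, ContinuousLinearMap.coe_smul',
        Pi.smul_apply, innerSL_apply_apply, smul_eq_mul] at h1
      rw [hgradv]
      exact h1
    have hA : ⟪p, q⟫ = ‖q‖ * ⟪q, gradient ω q⟫ + ω q * ‖q‖ := by
      rw [hId q, real_inner_self_eq_norm_mul_norm, real_inner_comm]
      field_simp
    have hB : ‖p‖ ≤ ‖q‖ * ‖gradient ω q‖ + ω q := by
      have h2 := hId p
      have h3 : ⟪gradient ω q, p⟫ ≤ ‖gradient ω q‖ * ‖p‖ := real_inner_le_norm _ _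
      have h4 : ⟪q, p⟫ ≤ ‖q‖ * ‖p‖ := real_inner_le_norm _ _
      have h5 : ⟪p, p⟫ = ‖p‖ * ‖p‖ := real_inner_self_eq_norm_mul_norm p
      have h6 : ‖q‖⁻¹ * ⟪q, p⟫ ≤ ‖p‖ := by
        rw [inv_mul_le_iff₀ hqpos]
        exact h4
      nlinarith [mul_le_mul_of_nonneg_left h3 hqpos.le, mul_le_mul_of_nonneg_left h6 hw0]
    have hbt : b * (‖q‖ * ‖gradient ω q‖) ≤ ⟪q, gradient ω q⟫ :=
      le_of_lt ((lt_div_iff₀ (by positivity)).mp hc)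
    rw [le_div_iff₀ (by positivity : (0:ℝ) < ‖p‖ * ‖q‖)]
    nlinarith [mul_le_mul_of_nonneg_left hB (mul_nonneg hb0.le hqpos.le),
      mul_le_mul_of_nonneg_right hbt hqpos.le,
      mul_nonneg (mul_nonneg (by linarith : (0:ℝ) ≤ 1 - b) hw0) hqpos.le, hA]
  refine le_of_forall_lt fun c hcη => ?_
  have hmax0 : max c 0 < η := max_lt hcη hη
  set b := (max c 0 + η) / 2 with hbdef
  have hb0 : 0 < b := by rw [hbdef]; linarith [le_max_right c 0]
  have hbη : b < η := by rw [hbdef]; linarith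
  have hcb : c < b := by rw [hbdef]; linarith [le_max_left c 0]
  have hcob : IsCoboundedUnder (· ≥ ·) l
      (fun p : EuclideanSpace ℝ (Fin N) => ⟪p, y₀ p⟫ / (‖p‖ * ‖y₀ p‖)) :=
    (isBoundedUnder_of ⟨1, fun p => (abs_le.mp (habs _ _)).2⟩).isCoboundedUnder_ge
  exact lt_of_lt_of_le hcb (le_liminf_of_le hcob (key b hb0 hbη))
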